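/- arXiv:0912.2737 — 3 statements merged into one kernel-verified Lean document; each statement's English description precedes it below -/
import Mathlib

section
/- Let E(ρ) = Σ_k A_k ρ A_kᴴ be a quantum channel from ℂ^m to ℂ^n, let E* be its adjoint, and let σ be the Choi matrix of the composite map N = E* ∘ E (so σ is an m²×m² positive semidefinite matrix). Then for all ψ, φ ∈ ℂ^m, tr[E(ψψᴴ) · E(φφᴴ)] = tr[σ · ((φφᴴ)ᵀ ⊗ ψψᴴ)]. Consequently, tr[E(ψψᴴ) · E(φφᴴ)] ≠ 0 for all nonzero ψ, φ ∈ ℂ^m if and only if the kernel of σ contains no nonzero product vector u ⊗ v with u, v ∈ ℂ^m. -/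
open Matrix

noncomputable section

/-- A family of Kraus operators for a quantum channel:
`∑ k, (A k)ᴴ * A k = 1` (trace preservation). -/
def IsKraus {ι m n : Type*} [Fintype ι] [Fintype m] [Fintype n] [DecidableEq m]
    (A : ι → Matrix n m ℂ) : Prop :=
  ∑ k, (A k)ᴴ * A k = 1

/-- Application of the channel with Kraus operators `A`: `ρ ↦ ∑ k, A k * ρ * (A k)ᴴ`. -/
def applyKraus {ι m n : Type*} [Fintype ι] [Fintype m]
    (A : ι → Matrix n m ℂ) (ρ : Matrix m m ℂ) : Matrix n n ℂ :=
  ∑ k, A k * ρ * (A k)ᴴ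

/-- The rank-one matrix `ψψᴴ` associated to a vector `ψ`. -/
def outer {α : Type*} (ψ : α → ℂ) : Matrix α α ℂ :=
  Matrix.vecMulVec ψ (star ψ)

/-- The Choi matrix `σ = ∑_{i,j} E_{ij} ⊗ N(E_{ij})` of a linear map `N` on
`m×m` matrices, where `E_{ij}` are the matrix units. -/
def choiMat {m : ℕ} (N : Matrix (Fin m) (Fin m) ℂ → Matrix (Fin m) (Fin m) ℂ) :
    Matrix (Fin m × Fin m) (Fin m × Fin m) ℂ :=
  ∑ i : Fin m, ∑ j : Fin m,
    Matrix.kroneckerMap (· * ·) (Matrix.single i j (1 : ℂ))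
      (N (Matrix.single i j (1 : ℂ)))

/-- The Choi matrix of the composite map `E* ∘ E`, where `E` is the channel with
Kraus operators `A` and `E*(Y) = ∑ₖ Aₖᴴ Y Aₖ` is its adjoint. -/
def choiAdjComp {m n κ : ℕ} (A : Fin κ → Matrix (Fin n) (Fin m) ℂ) :
    Matrix (Fin m × Fin m) (Fin m × Fin m) ℂ :=
  choiMat (fun ρ => applyKraus (fun k => (A k)ᴴ) (applyKraus A ρ))

/-! ### Auxiliary lemmas -/

lemma mul_outer_conjT {m n : ℕ} (A : Matrix (Fin n) (Fin m) ℂ) (ψ : Fin m → ℂ) :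
    A * outer ψ * Aᴴ = outer (A *ᵥ ψ) := by
  ext i j
  simp only [outer, Matrix.mul_apply, Matrix.vecMulVec_apply, Matrix.conjTranspose_apply,
    Matrix.mulVec, dotProduct, Pi.star_apply, star_sum, Finset.sum_mul_sum,
    Finset.sum_mul, Finset.mul_sum, star_mul']
  exact Finset.sum_congr rfl fun c _ => Finset.sum_congr rfl fun b _ => by ring

lemma trace_outer_mul_outer {n : ℕ} (a b : Fin n → ℂ) :
    Matrix.trace (outer a * outer b) = (star b ⬝ᵥ a) * (star a ⬝ᵥ b) := by
  simp only [outer, Matrix.trace, Matrix.diag, Matrix.mul_apply, Matrix.vecMulVec_apply,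
    dotProduct, Pi.star_apply, Finset.sum_mul_sum, Finset.sum_mul, Finset.mul_sum]
  rw [Finset.sum_comm]
  exact Finset.sum_congr rfl fun i _ => Finset.sum_congr rfl fun j _ => by ring

lemma choiMat_apply {m : ℕ} (N : Matrix (Fin m) (Fin m) ℂ → Matrix (Fin m) (Fin m) ℂ)
    (p q : Fin m × Fin m) :
    choiMat N p q = N (Matrix.single p.1 q.1 1) p.2 q.2 := by
  simp [choiMat, Matrix.sum_apply, Matrix.single, Matrix.kroneckerMap_apply,
    ite_mul, ite_and, Finset.sum_ite_eq', Finset.sum_ite_eq]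

lemma mul_std_mul {m : ℕ} (B C : Matrix (Fin m) (Fin m) ℂ) (a b i j : Fin m) :
    (B * Matrix.single a b (1:ℂ) * C) i j = B i a * C b j := by
  simp [Matrix.mul_apply, Matrix.single, ite_mul, mul_ite, ite_and,
    Finset.sum_ite_eq, Finset.sum_ite_eq', Finset.mul_sum, Finset.sum_mul]

lemma term_apply {m n κ : ℕ} (A : Fin κ → Matrix (Fin n) (Fin m) ℂ) (k l : Fin κ)
    (a b i j : Fin m) :
    ((A k)ᴴ * (A l * Matrix.single a b (1:ℂ) * (A l)ᴴ) * A k) i j =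
      ((A k)ᴴ * A l) i a * star (((A k)ᴴ * A l) j b) := by
  have h : (A k)ᴴ * (A l * Matrix.single a b (1:ℂ) * (A l)ᴴ) * A k =
      ((A k)ᴴ * A l) * Matrix.single a b (1:ℂ) * ((A l)ᴴ * A k) := by
    simp only [Matrix.mul_assoc]
  rw [h, mul_std_mul]
  congr 1
  have : (A l)ᴴ * A k = ((A k)ᴴ * A l)ᴴ := by simp [Matrix.conjTranspose_mul]
  rw [this, Matrix.conjTranspose_apply]

lemma choi_apply {m n κ : ℕ} (A : Fin κ → Matrix (Fin n) (Fin m) ℂ) (p q : Fin m × Fin m) :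
    choiAdjComp A p q =
      ∑ k, ∑ l, ((A k)ᴴ * A l) p.2 p.1 * star (((A k)ᴴ * A l) q.2 q.1) := by
  rw [choiAdjComp, choiMat_apply]
  simp only [applyKraus, conjTranspose_conjTranspose, Matrix.mul_sum, Matrix.sum_mul,
    Matrix.sum_apply]
  exact Finset.sum_congr rfl fun k _ => Finset.sum_congr rfl fun l _ =>
    term_apply A k l p.1 q.1 p.2 q.2

/-- The coefficient `⟨x_{kl}, w⟩` where `x_{kl}` is the "vectorization" of
`(A k)ᴴ * A l`. -/
def cval {m n κ : ℕ} (A : Fin κ → Matrix (Fin n) (Fin m) ℂ) (k l : Fin κ)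
    (w : Fin m × Fin m → ℂ) : ℂ :=
  ∑ q : Fin m × Fin m, star (((A k)ᴴ * A l) q.2 q.1) * w q

lemma mulVec_choi {m n κ : ℕ} (A : Fin κ → Matrix (Fin n) (Fin m) ℂ)
    (w : Fin m × Fin m → ℂ) (p : Fin m × Fin m) :
    (choiAdjComp A *ᵥ w) p = ∑ k, ∑ l, ((A k)ᴴ * A l) p.2 p.1 * cval A k l w := by
  simp only [Matrix.mulVec, dotProduct, choi_apply, cval, Finset.sum_mul,
    Finset.mul_sum]
  rw [Finset.sum_comm]
  refine Finset.sum_congr rfl fun k _ => ?_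
  rw [Finset.sum_comm]
  refine Finset.sum_congr rfl fun l _ => Finset.sum_congr rfl fun q _ => by ring

lemma quad {m n κ : ℕ} (A : Fin κ → Matrix (Fin n) (Fin m) ℂ) (w : Fin m × Fin m → ℂ) :
    star w ⬝ᵥ (choiAdjComp A *ᵥ w) = ∑ k, ∑ l, star (cval A k l w) * cval A k l w := by
  have hsc : ∀ k l, star (cval A k l w) =
      ∑ p : Fin m × Fin m, star (w p) * ((A k)ᴴ * A l) p.2 p.1 := by
    intro k l
    simp only [cval, star_sum, star_mul', star_star]
    exact Finset.sum_congr rfl fun p _ => by ring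
  simp only [dotProduct, mulVec_choi, Finset.mul_sum, Pi.star_apply]
  rw [Finset.sum_comm]
  refine Finset.sum_congr rfl fun k _ => ?_
  rw [Finset.sum_comm]
  refine Finset.sum_congr rfl fun l _ => ?_
  rw [hsc, Finset.sum_mul]
  exact Finset.sum_congr rfl fun p _ => by ring

lemma kron_eq {m : ℕ} (ψ φ : Fin m → ℂ) :
    Matrix.kroneckerMap (· * ·) (outer φ)ᵀ (outer ψ) =
      outer (fun p => star (φ p.1) * ψ p.2) := by
  ext p q
  simp only [Matrix.kroneckerMap_apply, outer, Matrix.transpose_apply,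
    Matrix.vecMulVec_apply, Pi.star_apply, star_mul', star_star]
  ring

lemma trace_mul_outer {α : Type*} [Fintype α] (σ : Matrix α α ℂ) (w : α → ℂ) :
    Matrix.trace (σ * outer w) = star w ⬝ᵥ (σ *ᵥ w) := by
  simp only [Matrix.trace, Matrix.diag, Matrix.mul_apply, outer, Matrix.vecMulVec_apply,
    dotProduct, Matrix.mulVec, Pi.star_apply, Finset.mul_sum]
  exact Finset.sum_congr rfl fun p _ => Finset.sum_congr rfl fun q _ => by ring

lemma cval_eq {m n κ : ℕ} (A : Fin κ → Matrix (Fin n) (Fin m) ℂ) (k l : Fin κ)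
    (ψ φ : Fin m → ℂ) :
    cval A k l (fun p => star (φ p.1) * ψ p.2) = star (A l *ᵥ φ) ⬝ᵥ (A k *ᵥ ψ) := by
  simp only [cval, Fintype.sum_prod_type, Matrix.mul_apply, Matrix.conjTranspose_apply,
    dotProduct, Matrix.mulVec, Pi.star_apply, star_sum, star_mul', star_star,
    Finset.sum_mul_sum, Finset.sum_mul, Finset.mul_sum]
  conv_lhs => enter [2, x]; rw [Finset.sum_comm]
  rw [Finset.sum_comm]
  refine Finset.sum_congr rfl fun i _ => ?_
  conv_lhs => rw [Finset.sum_comm]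
  refine Finset.sum_congr rfl fun b _ => Finset.sum_congr rfl fun c _ => by ring

lemma star_dot {n : ℕ} (a b : Fin n → ℂ) : star (star b ⬝ᵥ a) = star a ⬝ᵥ b := by
  simp only [dotProduct, Pi.star_apply, star_sum, star_mul', star_star]
  exact Finset.sum_congr rfl fun i _ => by ring

lemma lhs_trace {m n κ : ℕ} (A : Fin κ → Matrix (Fin n) (Fin m) ℂ) (ψ φ : Fin m → ℂ) :
    Matrix.trace (applyKraus A (outer ψ) * applyKraus A (outer φ)) =
      ∑ k, ∑ l, star (cval A k l (fun p => star (φ p.1) * ψ p.2)) *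
        cval A k l (fun p => star (φ p.1) * ψ p.2) := by
  have h1 : ∀ χ : Fin m → ℂ, applyKraus A (outer χ) = ∑ k, outer (A k *ᵥ χ) :=
    fun χ => Finset.sum_congr rfl fun k _ => mul_outer_conjT (A k) χ
  rw [h1, h1, Matrix.sum_mul]
  simp only [Matrix.mul_sum, Matrix.trace_sum]
  refine Finset.sum_congr rfl fun k _ => Finset.sum_congr rfl fun l _ => ?_
  rw [trace_outer_mul_outer, cval_eq, ← star_dot (A k *ᵥ ψ) (A l *ᵥ φ)]
  exact mul_comm _ _

lemma cval_vanish {m n κ : ℕ} (A : Fin κ → Matrix (Fin n) (Fin m) ℂ)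
    (w : Fin m × Fin m → ℂ)
    (h : (∑ k, ∑ l, star (cval A k l w) * cval A k l w) = 0) :
    ∀ k l, cval A k l w = 0 := by
  have he : ∀ k l : Fin κ, star (cval A k l w) * cval A k l w =
      ((Complex.normSq (cval A k l w) : ℝ) : ℂ) := by
    intro k l
    rw [mul_comm]; exact Complex.mul_conj _
  simp only [he] at h
  have h' : (∑ k, ∑ l, Complex.normSq (cval A k l w)) = 0 := by exact_mod_cast h
  intro k l
  have hk := (Finset.sum_eq_zero_iff_of_nonneg (fun k _ =>
      Finset.sum_nonneg fun l _ => Complex.normSq_nonneg _)).mp h' k (Finset.mem_univ k)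
  have hl := (Finset.sum_eq_zero_iff_of_nonneg (fun l _ =>
      Complex.normSq_nonneg _)).mp hk l (Finset.mem_univ l)
  exact Complex.normSq_eq_zero.mp hl

/-- Let `σ` be the Choi matrix of `E* ∘ E`.  Then
`tr[E(ψψᴴ)·E(φφᴴ)] = tr[σ·((φφᴴ)ᵀ ⊗ ψψᴴ)]` for all `ψ, φ`, and consequently all
pairs of nonzero inputs give non-orthogonal outputs iff the kernel of `σ` contains
no nonzero product vector `u ⊗ v`. -/
theorem trace_outputs_eq_choi_pairing
    {m n κ : ℕ} (A : Fin κ → Matrix (Fin n) (Fin m) ℂ) (hA : IsKraus A) :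
    (∀ ψ φ : Fin m → ℂ,
      Matrix.trace (applyKraus A (outer ψ) * applyKraus A (outer φ)) =
        Matrix.trace (choiAdjComp A *
          Matrix.kroneckerMap (· * ·) (outer φ)ᵀ (outer ψ))) ∧
    ((∀ ψ φ : Fin m → ℂ, ψ ≠ 0 → φ ≠ 0 →
        Matrix.trace (applyKraus A (outer ψ) * applyKraus A (outer φ)) ≠ 0) ↔
      (∀ u v : Fin m → ℂ, u ≠ 0 → v ≠ 0 →
        choiAdjComp A *ᵥ (fun p => u p.1 * v p.2) ≠ 0)) := by
  constructor
  · intro ψ φ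
    rw [lhs_trace, kron_eq, trace_mul_outer, quad]
  · constructor
    · intro h u v hu hv h0
      have hφ : (star u : Fin m → ℂ) ≠ 0 := fun h' => hu (by simpa using congrArg star h')
      apply h v (star u) hv hφ
      rw [lhs_trace, ← quad]
      have hw : (fun p : Fin m × Fin m => star ((star u) p.1) * v p.2) =
          (fun p => u p.1 * v p.2) := by
        funext p; simp
      rw [hw, h0, dotProduct_zero]
    · intro h ψ φ hψ hφ h0
      have hc : ∀ k l, cval A k l (fun p => star (φ p.1) * ψ p.2) = 0 :=
        cval_vanish A _ (by rw [← lhs_trace]; exact h0)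
      have hz : choiAdjComp A *ᵥ (fun p => star (φ p.1) * ψ p.2) = 0 := by
        funext p
        rw [mulVec_choi]
        simp only [Pi.zero_apply]
        exact Finset.sum_eq_zero fun k _ => Finset.sum_eq_zero fun l _ => by
          rw [hc, mul_zero]
      have hsφ : (star φ : Fin m → ℂ) ≠ 0 := fun h' => hφ (by simpa using congrArg star h')
      exact h (star φ) ψ hsφ hψ hz
end
end

section
/- Let {R_i} be a finite set of rank-one matrices in the space of a×b complex matrices such that no nonzero matrix of rank at most 1 is Frobenius-orthogonal to every R_i (an unextendible product basis). Then the subspace S = span{R_i} is strongly unextendible: for every integer k ≥ 1, no nonzero matrix of rank at most 1 (of size a^k × b^k) is Frobenius-orthogonal to the span of all k-fold Kronecker products M_1 ⊗ ⋯ ⊗ M_k with each M_i ∈ S. -/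
open Matrix

noncomputable section

/-- Frobenius (Hilbert-Schmidt) inner product `⟨M, N⟩ = tr(Mᴴ N)`. -/
def frobInner {α β : Type*} [Fintype α] [Fintype β] (M N : Matrix α β ℂ) : ℂ :=
  Matrix.trace (Mᴴ * N)

/-- `k`-fold Kronecker product of a family of matrices. -/
def kronPow {a b : ℕ} (k : ℕ) (M : Fin k → Matrix (Fin a) (Fin b) ℂ) :
    Matrix (Fin k → Fin a) (Fin k → Fin b) ℂ :=
  Matrix.of fun i j => ∏ t, M t (i t) (j t)

/-- A set `S` of `a×b` matrices is `k`-unextendible if no nonzero matrix of rank at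
most one (equivalently, no nonzero outer product `u vᵀ`) is Frobenius-orthogonal to
`S^{⊗k}`, i.e. to every `k`-fold Kronecker product of elements of `S`. -/
def KUnextendible {a b : ℕ} (S : Set (Matrix (Fin a) (Fin b) ℂ)) (k : ℕ) : Prop :=
  ∀ (u : (Fin k → Fin a) → ℂ) (v : (Fin k → Fin b) → ℂ), u ≠ 0 → v ≠ 0 →
    ∃ M : Fin k → Matrix (Fin a) (Fin b) ℂ, (∀ t, M t ∈ S) ∧
      frobInner (kronPow k M) (Matrix.vecMulVec u v) ≠ 0

/-- A set of matrices is strongly unextendible if it is `k`-unextendible for all `k ≥ 1`. -/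
def StronglyUnextendible {a b : ℕ} (S : Set (Matrix (Fin a) (Fin b) ℂ)) : Prop :=
  ∀ k : ℕ, 1 ≤ k → KUnextendible S k

/-- A family of matrices is an unextendible product basis if no nonzero matrix of
rank at most one is Frobenius-orthogonal to every member of the family. -/
def IsUPB {α β ι : Type*} [Fintype α] [Fintype β] (R : ι → Matrix α β ℂ) : Prop :=
  ∀ (u : α → ℂ) (v : β → ℂ), u ≠ 0 → v ≠ 0 →
    ∃ i, frobInner (R i) (Matrix.vecMulVec u v) ≠ 0

/-! ### Auxiliary lemmas -/

local notation "conj'" => starRingEnd ℂ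

/-- Expansion of the Frobenius inner product with an outer product. -/
lemma frobInner_vecMulVec_right {α β : Type*} [Fintype α] [Fintype β]
    (A : Matrix α β ℂ) (u : α → ℂ) (v : β → ℂ) :
    frobInner A (Matrix.vecMulVec u v) = ∑ j, ∑ i, conj' (A i j) * (u i * v j) := by
  simp [frobInner, Matrix.trace, Matrix.mul_apply, Matrix.vecMulVec_apply,
    Matrix.conjTranspose_apply, Matrix.diag]

/-- The Frobenius inner product of two outer products factors. -/
lemma frobInner_vecMulVec_vecMulVec {α β : Type*} [Fintype α] [Fintype β]
    (w u : α → ℂ) (z v : β → ℂ) :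
    frobInner (Matrix.vecMulVec w z) (Matrix.vecMulVec u v)
      = (∑ i, conj' (w i) * u i) * (∑ j, conj' (z j) * v j) := by
  rw [frobInner_vecMulVec_right, Finset.sum_mul_sum, Finset.sum_comm]
  refine Finset.sum_congr rfl fun j _ => Finset.sum_congr rfl fun i _ => ?_
  simp only [Matrix.vecMulVec_apply, _root_.map_mul]
  ring

/-- A rank-one matrix over ℂ is an outer product. -/
lemma rank_one_decomp {a b : ℕ} (M : Matrix (Fin a) (Fin b) ℂ) (h : M.rank = 1) :
    ∃ w z, M = Matrix.vecMulVec w z := by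
  rw [Matrix.rank_eq_finrank_span_cols] at h
  obtain ⟨v, -, hv⟩ := finrank_eq_one_iff'.mp h
  have hcol : ∀ j : Fin b, ∃ c : ℂ, c • (v : Fin a → ℂ) = Mᵀ j := by
    intro j
    obtain ⟨c, hc⟩ := hv ⟨Mᵀ j, Submodule.subset_span ⟨j, rfl⟩⟩
    exact ⟨c, congrArg Subtype.val hc⟩
  choose c hc using hcol
  refine ⟨(v : Fin a → ℂ), c, ?_⟩
  ext i j
  have := congrFun (hc j) i
  simp only [Pi.smul_apply, smul_eq_mul, Matrix.transpose_apply] at this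
  rw [Matrix.vecMulVec_apply, ← this]; ring

/-- The contraction functional. -/
def Phi {a : ℕ} (k : ℕ) (w : Fin k → Fin a → ℂ) (u : (Fin k → Fin a) → ℂ) : ℂ :=
  ∑ i, (∏ t, conj' (w t (i t))) * u i

lemma kronPow_vecMulVec {a b : ℕ} (k : ℕ) (w : Fin k → Fin a → ℂ) (z : Fin k → Fin b → ℂ) :
    kronPow k (fun t => Matrix.vecMulVec (w t) (z t))
      = Matrix.vecMulVec (fun i => ∏ t, w t (i t)) (fun j => ∏ t, z t (j t)) := by
  ext i j
  simp [kronPow, Matrix.vecMulVec_apply, Finset.prod_mul_distrib]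

lemma frobInner_kronPow_eq {a b : ℕ} (k : ℕ) (w : Fin k → Fin a → ℂ) (z : Fin k → Fin b → ℂ)
    (u : (Fin k → Fin a) → ℂ) (v : (Fin k → Fin b) → ℂ) :
    frobInner (kronPow k (fun t => Matrix.vecMulVec (w t) (z t))) (Matrix.vecMulVec u v)
      = Phi k w u * Phi k z v := by
  rw [kronPow_vecMulVec, frobInner_vecMulVec_vecMulVec]
  simp only [Phi, map_prod]

lemma Phi_cons {a : ℕ} (k : ℕ) (w₀ : Fin a → ℂ) (w : Fin k → Fin a → ℂ)
    (u : (Fin (k + 1) → Fin a) → ℂ) :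
    Phi (k + 1) (Fin.cons w₀ w) u
      = Phi k w (fun i' => ∑ α, conj' (w₀ α) * u (Fin.cons α i')) := by
  unfold Phi
  rw [← (Fin.consEquiv fun _ => Fin a).sum_comp
    (fun i => (∏ t, conj' ((Fin.cons w₀ w : ∀ _, Fin a → ℂ) t (i t))) * u i)]
  rw [Fintype.sum_prod_type]
  rw [Finset.sum_comm]
  refine Finset.sum_congr rfl fun i' _ => ?_
  rw [Finset.mul_sum]
  refine Finset.sum_congr rfl fun α _ => ?_
  have heq : ((Fin.consEquiv fun _ => Fin a) (α, i')) = Fin.cons α i' := rfl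
  rw [heq]
  simp only [Fin.prod_univ_succ, Fin.cons_zero, Fin.cons_succ]
  ring

lemma Phi_one {a : ℕ} (w₀ : Fin a → ℂ) (u : (Fin 1 → Fin a) → ℂ) :
    Phi 1 (fun _ => w₀) u = ∑ α, conj' (w₀ α) * u (fun _ => α) := by
  unfold Phi
  rw [← (Equiv.funUnique (Fin 1) (Fin a)).symm.sum_comp
    (fun i => (∏ t, conj' (w₀ (i t))) * u i)]
  refine Finset.sum_congr rfl fun α _ => ?_
  simp only [Equiv.funUnique, Equiv.coe_fn_symm_mk, Fin.prod_univ_one]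
  rfl

/-- **The span of an unextendible product basis is strongly unextendible
(Lemma 7 of the paper).** -/
theorem span_of_UPB_strongly_unextendible
    {a b r : ℕ} (R : Fin r → Matrix (Fin a) (Fin b) ℂ)
    (hrank : ∀ i, (R i).rank = 1) (hR : IsUPB R) :
    StronglyUnextendible
      ((Submodule.span ℂ (Set.range R) : Submodule ℂ (Matrix (Fin a) (Fin b) ℂ)) :
        Set (Matrix (Fin a) (Fin b) ℂ)) := by
  -- fix a rank-one decomposition of each element of the UPB
  choose W Z hWZ using fun i => rank_one_decomp (R i) (hrank i)
  -- UPB condition in terms of the decomposition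
  have hUPB : ∀ (u : Fin a → ℂ) (v : Fin b → ℂ), u ≠ 0 → v ≠ 0 →
      ∃ i, (∑ α, conj' (W i α) * u α) ≠ 0 ∧ (∑ β, conj' (Z i β) * v β) ≠ 0 := by
    intro u v hu hv
    obtain ⟨i, hi⟩ := hR u v hu hv
    rw [hWZ i, frobInner_vecMulVec_vecMulVec] at hi
    exact ⟨i, left_ne_zero_of_mul hi, right_ne_zero_of_mul hi⟩
  -- main claim by induction on k ≥ 1
  have key : ∀ k : ℕ, 1 ≤ k → ∀ (u : (Fin k → Fin a) → ℂ) (v : (Fin k → Fin b) → ℂ),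
      u ≠ 0 → v ≠ 0 → ∃ f : Fin k → Fin r,
        Phi k (fun t => W (f t)) u ≠ 0 ∧ Phi k (fun t => Z (f t)) v ≠ 0 := by
    intro k hk
    induction k, hk using Nat.le_induction with
    | base =>
      intro u v hu hv
      have hu' : (fun α => u fun _ => α) ≠ 0 := by
        intro h
        apply hu
        funext i
        have := congrFun h (i 0)
        simpa [show (fun _ => i 0 : Fin 1 → Fin a) = i from
          funext fun t => by rw [Subsingleton.elim t 0]] using this
      have hv' : (fun β => v fun _ => β) ≠ 0 := by
        intro h
        apply hv
        funext j
        have := congrFun h (j 0)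
        simpa [show (fun _ => j 0 : Fin 1 → Fin b) = j from
          funext fun t => by rw [Subsingleton.elim t 0]] using this
      obtain ⟨i, h1, h2⟩ := hUPB _ _ hu' hv'
      refine ⟨fun _ => i, ?_, ?_⟩
      · rw [Phi_one]; exact h1
      · rw [Phi_one]; exact h2
    | succ k hk ih =>
      intro u v hu hv
      -- find nonzero slices
      obtain ⟨i₀, hi₀⟩ : ∃ i, u i ≠ 0 := by
        by_contra h; push_neg at h; exact hu (funext h)
      obtain ⟨j₀, hj₀⟩ : ∃ j, v j ≠ 0 := by
        by_contra h; push_neg at h; exact hv (funext h)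
      set u₀ : Fin a → ℂ := fun α => u (Fin.cons α (Fin.tail i₀)) with hu₀def
      set v₀ : Fin b → ℂ := fun β => v (Fin.cons β (Fin.tail j₀)) with hv₀def
      have hu₀ : u₀ ≠ 0 := by
        intro h
        apply hi₀
        have h2 := congrFun h (i₀ 0)
        simp only [hu₀def, Pi.zero_apply] at h2
        rwa [Fin.cons_self_tail] at h2
      have hv₀ : v₀ ≠ 0 := by
        intro h
        apply hj₀
        have h2 := congrFun h (j₀ 0)
        simp only [hv₀def, Pi.zero_apply] at h2
        rwa [Fin.cons_self_tail] at h2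
      obtain ⟨i, h1, h2⟩ := hUPB u₀ v₀ hu₀ hv₀
      set u' : (Fin k → Fin a) → ℂ := fun i' => ∑ α, conj' (W i α) * u (Fin.cons α i') with hu'def
      set v' : (Fin k → Fin b) → ℂ := fun j' => ∑ β, conj' (Z i β) * v (Fin.cons β j') with hv'def
      have hu' : u' ≠ 0 := by
        intro h
        apply h1
        have := congrFun h (Fin.tail i₀)
        simpa [hu'def, hu₀def] using this
      have hv' : v' ≠ 0 := by
        intro h
        apply h2
        have := congrFun h (Fin.tail j₀)
        simpa [hv'def, hv₀def] using this
      obtain ⟨f, hf1, hf2⟩ := ih u' v' hu' hv'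
      refine ⟨(Fin.cons i f : Fin (k + 1) → Fin r), ?_, ?_⟩
      · have heq : (fun t => W ((Fin.cons i f : Fin (k + 1) → Fin r) t))
            = Fin.cons (W i) (fun t => W (f t)) := by
          funext t; refine Fin.cases ?_ ?_ t <;> simp
        rw [heq, Phi_cons]; exact hf1
      · have heq : (fun t => Z ((Fin.cons i f : Fin (k + 1) → Fin r) t))
            = Fin.cons (Z i) (fun t => Z (f t)) := by
          funext t; refine Fin.cases ?_ ?_ t <;> simp
        rw [heq, Phi_cons]; exact hf2
  -- assemble
  intro k hk u v hu hv
  obtain ⟨f, h1, h2⟩ := key k hk u v hu hv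
  refine ⟨fun t => R (f t), fun t => Submodule.subset_span ⟨f t, rfl⟩, ?_⟩
  have : (fun t => R (f t)) = fun t => Matrix.vecMulVec (W (f t)) (Z (f t)) := by
    funext t; exact hWZ (f t)
  rw [this, frobInner_kronPow_eq]
  exact mul_ne_zero h1 h2
end
end

section
/- Let dA be a positive integer, X the dA×dA anti-diagonal matrix, P_± = (I ± X)/2, and let S be a strongly unextendible subspace of dA×dA complex matrices. Define S' to be the span of the set {M, XMX, Mᴴ, XMᴴX, P₊MP₋, P₊XMXP₋, P₊MᴴP₋, P₊XMᴴXP₋, P₋MP₊, P₋XMXP₊, P₋MᴴP₊, P₋XMᴴXP₊} over all M ∈ S. Then: (1) dim S' ≤ 12·dim S; (2) S' is strongly unextendible; (3) S' is closed under conjugate transpose; (4) S'X = {MX : M ∈ S'} is closed under conjugate transpose; and (5) tr[Mᴴ (I+X) N (I−X)] = 0 for all M ∈ S' and N in the Frobenius orthocomplement of S'. -/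
open Matrix

noncomputable section

/-- Frobenius orthogonal complement of a set of matrices. -/
def frobOrthSet {α β : Type*} [Fintype α] [Fintype β] (S : Set (Matrix α β ℂ)) :
    Set (Matrix α β ℂ) :=
  {N | ∀ M ∈ S, frobInner M N = 0}

/-- The `n×n` matrix with ones on the anti-diagonal and zeros elsewhere. -/
def Xmat (n : ℕ) : Matrix (Fin n) (Fin n) ℂ :=
  Matrix.of fun i j => if (i : ℕ) + (j : ℕ) = n - 1 then 1 else 0

/-- `P₊ = (I + X)/2`. -/
def Pplus (n : ℕ) : Matrix (Fin n) (Fin n) ℂ := (2 : ℂ)⁻¹ • (1 + Xmat n)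

/-- `P₋ = (I − X)/2`. -/
def Pminus (n : ℕ) : Matrix (Fin n) (Fin n) ℂ := (2 : ℂ)⁻¹ • (1 - Xmat n)

/-- The symmetrisation of a set `S` of `dA×dA` matrices: all matrices of the form
`M, XMX, Mᴴ, XMᴴX, P₊MP₋, P₊XMXP₋, P₊MᴴP₋, P₊XMᴴXP₋, P₋MP₊, P₋XMXP₊, P₋MᴴP₊,
P₋XMᴴXP₊` with `M ∈ S`. -/
def symSet (dA : ℕ) (S : Set (Matrix (Fin dA) (Fin dA) ℂ)) :
    Set (Matrix (Fin dA) (Fin dA) ℂ) :=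
  {N | ∃ M ∈ S,
    N = M ∨ N = Xmat dA * M * Xmat dA ∨ N = Mᴴ ∨ N = Xmat dA * Mᴴ * Xmat dA ∨
    N = Pplus dA * M * Pminus dA ∨ N = Pplus dA * (Xmat dA * M * Xmat dA) * Pminus dA ∨
    N = Pplus dA * Mᴴ * Pminus dA ∨ N = Pplus dA * (Xmat dA * Mᴴ * Xmat dA) * Pminus dA ∨
    N = Pminus dA * M * Pplus dA ∨ N = Pminus dA * (Xmat dA * M * Xmat dA) * Pplus dA ∨
    N = Pminus dA * Mᴴ * Pplus dA ∨ N = Pminus dA * (Xmat dA * Mᴴ * Xmat dA) * Pplus dA}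

/-! ### Auxiliary lemmas -/

section Aux

open Submodule

lemma Xmat_apply' {n : ℕ} (i j : Fin n) : Xmat n i j = if j = i.rev then 1 else 0 := by
  have h : ((i : ℕ) + (j : ℕ) = n - 1) ↔ j = i.rev := by
    rw [Fin.ext_iff]; simp only [Fin.val_rev]; omega
  simp [Xmat, h]

lemma Xmat_apply'' {n : ℕ} (i j : Fin n) : Xmat n i j = if i = j.rev then 1 else 0 := by
  have h : ((i : ℕ) + (j : ℕ) = n - 1) ↔ i = j.rev := by
    rw [Fin.ext_iff]; simp only [Fin.val_rev]; omega
  simp [Xmat, h]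

lemma Xmat_herm {n : ℕ} : (Xmat n)ᴴ = Xmat n := by
  ext i j
  simp [Xmat, Matrix.conjTranspose_apply, apply_ite, Nat.add_comm]

lemma XX {n : ℕ} : Xmat n * Xmat n = 1 := by
  ext i j
  rw [Matrix.mul_apply]
  calc (∑ x : Fin n, Xmat n i x * Xmat n x j)
      = ∑ x : Fin n, (if x = i.rev then 1 else 0) * (if x = j.rev then 1 else 0) := by
        refine Finset.sum_congr rfl fun x _ => ?_
        rw [Xmat_apply' i x, Xmat_apply'' x j]
    _ = (1 : Matrix (Fin n) (Fin n) ℂ) i j := by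
        simp only [Finset.sum_ite_eq', Finset.mem_univ, if_true, ite_mul, one_mul, zero_mul,
          Matrix.one_apply, Fin.rev_inj]

lemma Pplus_herm {n : ℕ} : (Pplus n)ᴴ = Pplus n := by
  simp [Pplus, Matrix.conjTranspose_smul, Xmat_herm]
lemma Pminus_herm {n : ℕ} : (Pminus n)ᴴ = Pminus n := by
  simp [Pminus, Matrix.conjTranspose_smul, Xmat_herm]
lemma X_Pplus {n : ℕ} : Xmat n * Pplus n = Pplus n := by
  simp [Pplus, Matrix.mul_smul, mul_add, XX, add_comm]
lemma Pplus_X {n : ℕ} : Pplus n * Xmat n = Pplus n := by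
  simp [Pplus, Matrix.smul_mul, add_mul, XX, add_comm]
lemma X_Pminus {n : ℕ} : Xmat n * Pminus n = -Pminus n := by
  simp only [Pminus, Matrix.mul_smul, mul_sub, mul_one, XX]
  module
lemma Pminus_X {n : ℕ} : Pminus n * Xmat n = -Pminus n := by
  simp only [Pminus, Matrix.smul_mul, sub_mul, one_mul, XX]
  module
lemma Pp_Pp {n : ℕ} : Pplus n * Pplus n = Pplus n := by
  simp only [Pplus, Matrix.smul_mul, Matrix.mul_smul, add_mul, mul_add, one_mul, mul_one, XX,
    smul_smul]
  norm_num
  module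
lemma Pm_Pm {n : ℕ} : Pminus n * Pminus n = Pminus n := by
  simp only [Pminus, Matrix.smul_mul, Matrix.mul_smul, sub_mul, mul_sub, one_mul, mul_one, XX,
    smul_smul]
  norm_num
  module
lemma Pp_Pm {n : ℕ} : Pplus n * Pminus n = 0 := by
  simp only [Pplus, Pminus, Matrix.smul_mul, Matrix.mul_smul, add_mul, mul_sub, one_mul, mul_one,
    XX, smul_smul]
  module
lemma Pm_Pp {n : ℕ} : Pminus n * Pplus n = 0 := by
  simp only [Pplus, Pminus, Matrix.smul_mul, Matrix.mul_smul, sub_mul, mul_add, one_mul, mul_one,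
    XX, smul_smul]
  module

section Helpers
variable {V W : Type*} [AddCommGroup V] [Module ℂ V] [AddCommGroup W] [Module ℂ W]

lemma mem_span_image_of_linear (f : V →ₗ[ℂ] W) {s : Set V} {M : V}
    (h : M ∈ span ℂ s) : f M ∈ span ℂ (f '' s) := by
  rw [← Submodule.map_span]; exact Submodule.mem_map_of_mem h

lemma case_helper (f : V →ₗ[ℂ] W) {s : Set V} {G : Set W}
    (himg : ∀ x ∈ s, f x ∈ G) {M : V} (hM : M ∈ span ℂ s) : f M ∈ span ℂ G := by
  have h2 := mem_span_image_of_linear f hM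
  refine Submodule.span_le.mpr ?_ h2
  rintro _ ⟨x, hx, rfl⟩
  exact subset_span (himg x hx)

lemma span_closed_linear (f : V →ₗ[ℂ] V) {s : Set V}
    (h : ∀ x ∈ s, f x ∈ span ℂ s) {M : V} (hM : M ∈ span ℂ s) : f M ∈ span ℂ s := by
  have h2 := mem_span_image_of_linear f hM
  refine Submodule.span_le.mpr ?_ h2
  rintro _ ⟨x, hx, rfl⟩; exact h x hx

lemma dag_mem_span_image {n : ℕ} {s : Set (Matrix (Fin n) (Fin n) ℂ)}
    {M : Matrix (Fin n) (Fin n) ℂ} (h : M ∈ span ℂ s) :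
    Mᴴ ∈ span ℂ ((·ᴴ) '' s) := by
  induction h using Submodule.span_induction with
  | mem x hx => exact subset_span ⟨x, hx, rfl⟩
  | zero => simp
  | add x y _ _ hx hy => rw [Matrix.conjTranspose_add]; exact add_mem hx hy
  | smul c x _ hx => rw [Matrix.conjTranspose_smul]; exact Submodule.smul_mem _ _ hx

lemma span_closed_dag {n : ℕ} {s : Set (Matrix (Fin n) (Fin n) ℂ)}
    (h : ∀ x ∈ s, xᴴ ∈ span ℂ s) {M : Matrix (Fin n) (Fin n) ℂ}
    (hM : M ∈ span ℂ s) : Mᴴ ∈ span ℂ s := by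
  have h2 := dag_mem_span_image hM
  refine Submodule.span_le.mpr ?_ h2
  rintro _ ⟨x, hx, rfl⟩; exact h x hx

/-- The sandwich map `M ↦ A M B` as a linear map. -/
def sand {n : ℕ} (A B : Matrix (Fin n) (Fin n) ℂ) :
    Matrix (Fin n) (Fin n) ℂ →ₗ[ℂ] Matrix (Fin n) (Fin n) ℂ where
  toFun M := A * M * B
  map_add' M N := by noncomm_ring
  map_smul' c M := by simp [Matrix.mul_smul, Matrix.smul_mul]

@[simp] lemma sand_apply {n : ℕ} (A B M : Matrix (Fin n) (Fin n) ℂ) :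
    sand A B M = A * M * B := rfl
end Helpers

variable {dA : ℕ} (S : Submodule ℂ (Matrix (Fin dA) (Fin dA) ℂ))

lemma dag_symSet : ∀ x ∈ symSet dA (S : Set (Matrix (Fin dA) (Fin dA) ℂ)),
    xᴴ ∈ symSet dA (S : Set (Matrix (Fin dA) (Fin dA) ℂ)) := by
  rintro x ⟨M, hM, h⟩
  refine ⟨M, hM, ?_⟩
  rcases h with h|h|h|h|h|h|h|h|h|h|h|h <;> subst h
  · exact Or.inr (Or.inr (Or.inl rfl))
  · refine Or.inr (Or.inr (Or.inr (Or.inl ?_)))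
    simp [Matrix.conjTranspose_mul, Xmat_herm, Matrix.mul_assoc]
  · exact Or.inl (Matrix.conjTranspose_conjTranspose M)
  · refine Or.inr (Or.inl ?_)
    simp [Matrix.conjTranspose_mul, Xmat_herm, Matrix.mul_assoc]
  · refine Or.inr (Or.inr (Or.inr (Or.inr (Or.inr (Or.inr (Or.inr (Or.inr (Or.inr (Or.inr
      (Or.inl ?_))))))))))
    simp [Matrix.conjTranspose_mul, Xmat_herm, Pplus_herm, Pminus_herm, Matrix.mul_assoc]
  · refine Or.inr (Or.inr (Or.inr (Or.inr (Or.inr (Or.inr (Or.inr (Or.inr (Or.inr (Or.inr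
      (Or.inr ?_))))))))))
    simp [Matrix.conjTranspose_mul, Xmat_herm, Pplus_herm, Pminus_herm, Matrix.mul_assoc]
  · refine Or.inr (Or.inr (Or.inr (Or.inr (Or.inr (Or.inr (Or.inr (Or.inr (Or.inl ?_))))))))
    simp [Matrix.conjTranspose_mul, Xmat_herm, Pplus_herm, Pminus_herm, Matrix.mul_assoc]
  · refine Or.inr (Or.inr (Or.inr (Or.inr (Or.inr (Or.inr (Or.inr (Or.inr (Or.inr (Or.inl ?_)))))))))
    simp [Matrix.conjTranspose_mul, Xmat_herm, Pplus_herm, Pminus_herm, Matrix.mul_assoc]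
  · refine Or.inr (Or.inr (Or.inr (Or.inr (Or.inr (Or.inr (Or.inl ?_))))))
    simp [Matrix.conjTranspose_mul, Xmat_herm, Pplus_herm, Pminus_herm, Matrix.mul_assoc]
  · refine Or.inr (Or.inr (Or.inr (Or.inr (Or.inr (Or.inr (Or.inr (Or.inl ?_)))))))
    simp [Matrix.conjTranspose_mul, Xmat_herm, Pplus_herm, Pminus_herm, Matrix.mul_assoc]
  · refine Or.inr (Or.inr (Or.inr (Or.inr (Or.inl ?_))))
    simp [Matrix.conjTranspose_mul, Xmat_herm, Pplus_herm, Pminus_herm, Matrix.mul_assoc]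
  · refine Or.inr (Or.inr (Or.inr (Or.inr (Or.inr (Or.inl ?_)))))
    simp [Matrix.conjTranspose_mul, Xmat_herm, Pplus_herm, Pminus_herm, Matrix.mul_assoc]

lemma Xsand_symSet : ∀ x ∈ symSet dA (S : Set (Matrix (Fin dA) (Fin dA) ℂ)),
    Xmat dA * x * Xmat dA ∈ span ℂ (symSet dA (S : Set (Matrix (Fin dA) (Fin dA) ℂ))) := by
  rintro x ⟨M, hM, h⟩
  rcases h with h|h|h|h|h|h|h|h|h|h|h|h <;> rw [h]
  · exact subset_span ⟨M, hM, Or.inr (Or.inl rfl)⟩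
  · rw [show Xmat dA * (Xmat dA * M * Xmat dA) * Xmat dA
        = (Xmat dA * Xmat dA) * M * (Xmat dA * Xmat dA) by noncomm_ring, XX, one_mul, mul_one]
    exact subset_span ⟨M, hM, Or.inl rfl⟩
  · exact subset_span ⟨M, hM, Or.inr (Or.inr (Or.inr (Or.inl rfl)))⟩
  · rw [show Xmat dA * (Xmat dA * Mᴴ * Xmat dA) * Xmat dA
        = (Xmat dA * Xmat dA) * Mᴴ * (Xmat dA * Xmat dA) by noncomm_ring, XX, one_mul, mul_one]
    exact subset_span ⟨M, hM, Or.inr (Or.inr (Or.inl rfl))⟩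
  · rw [show Xmat dA * (Pplus dA * M * Pminus dA) * Xmat dA
        = (Xmat dA * Pplus dA) * M * (Pminus dA * Xmat dA) by noncomm_ring, X_Pplus, Pminus_X,
        Matrix.mul_neg]
    exact neg_mem (subset_span ⟨M, hM, Or.inr (Or.inr (Or.inr (Or.inr (Or.inl rfl))))⟩)
  · rw [show Xmat dA * (Pplus dA * (Xmat dA * M * Xmat dA) * Pminus dA) * Xmat dA
        = (Xmat dA * Pplus dA) * (Xmat dA * M * Xmat dA) * (Pminus dA * Xmat dA) by noncomm_ring,
        X_Pplus, Pminus_X, Matrix.mul_neg]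
    exact neg_mem (subset_span ⟨M, hM, Or.inr (Or.inr (Or.inr (Or.inr (Or.inr (Or.inl rfl)))))⟩)
  · rw [show Xmat dA * (Pplus dA * Mᴴ * Pminus dA) * Xmat dA
        = (Xmat dA * Pplus dA) * Mᴴ * (Pminus dA * Xmat dA) by noncomm_ring, X_Pplus, Pminus_X,
        Matrix.mul_neg]
    exact neg_mem (subset_span ⟨M, hM, Or.inr (Or.inr (Or.inr (Or.inr (Or.inr (Or.inr
      (Or.inl rfl))))))⟩)
  · rw [show Xmat dA * (Pplus dA * (Xmat dA * Mᴴ * Xmat dA) * Pminus dA) * Xmat dA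
        = (Xmat dA * Pplus dA) * (Xmat dA * Mᴴ * Xmat dA) * (Pminus dA * Xmat dA) by noncomm_ring,
        X_Pplus, Pminus_X, Matrix.mul_neg]
    exact neg_mem (subset_span ⟨M, hM, Or.inr (Or.inr (Or.inr (Or.inr (Or.inr (Or.inr (Or.inr
      (Or.inl rfl)))))))⟩)
  · rw [show Xmat dA * (Pminus dA * M * Pplus dA) * Xmat dA
        = (Xmat dA * Pminus dA) * M * (Pplus dA * Xmat dA) by noncomm_ring, X_Pminus, Pplus_X,
        Matrix.neg_mul, Matrix.neg_mul]
    exact neg_mem (subset_span ⟨M, hM, Or.inr (Or.inr (Or.inr (Or.inr (Or.inr (Or.inr (Or.inr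
      (Or.inr (Or.inl rfl))))))))⟩)
  · rw [show Xmat dA * (Pminus dA * (Xmat dA * M * Xmat dA) * Pplus dA) * Xmat dA
        = (Xmat dA * Pminus dA) * (Xmat dA * M * Xmat dA) * (Pplus dA * Xmat dA) by noncomm_ring,
        X_Pminus, Pplus_X, Matrix.neg_mul, Matrix.neg_mul]
    exact neg_mem (subset_span ⟨M, hM, Or.inr (Or.inr (Or.inr (Or.inr (Or.inr (Or.inr (Or.inr
      (Or.inr (Or.inr (Or.inl rfl)))))))))⟩)
  · rw [show Xmat dA * (Pminus dA * Mᴴ * Pplus dA) * Xmat dA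
        = (Xmat dA * Pminus dA) * Mᴴ * (Pplus dA * Xmat dA) by noncomm_ring, X_Pminus, Pplus_X,
        Matrix.neg_mul, Matrix.neg_mul]
    exact neg_mem (subset_span ⟨M, hM, Or.inr (Or.inr (Or.inr (Or.inr (Or.inr (Or.inr (Or.inr
      (Or.inr (Or.inr (Or.inr (Or.inl rfl))))))))))⟩)
  · rw [show Xmat dA * (Pminus dA * (Xmat dA * Mᴴ * Xmat dA) * Pplus dA) * Xmat dA
        = (Xmat dA * Pminus dA) * (Xmat dA * Mᴴ * Xmat dA) * (Pplus dA * Xmat dA) by noncomm_ring,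
        X_Pminus, Pplus_X, Matrix.neg_mul, Matrix.neg_mul]
    exact neg_mem (subset_span ⟨M, hM, Or.inr (Or.inr (Or.inr (Or.inr (Or.inr (Or.inr (Or.inr
      (Or.inr (Or.inr (Or.inr (Or.inr rfl))))))))))⟩)

lemma Psand_symSet : ∀ x ∈ symSet dA (S : Set (Matrix (Fin dA) (Fin dA) ℂ)),
    Pplus dA * x * Pminus dA ∈ span ℂ (symSet dA (S : Set (Matrix (Fin dA) (Fin dA) ℂ))) := by
  rintro x ⟨M, hM, h⟩
  rcases h with h|h|h|h|h|h|h|h|h|h|h|h <;> rw [h]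
  · exact subset_span ⟨M, hM, Or.inr (Or.inr (Or.inr (Or.inr (Or.inl rfl))))⟩
  · exact subset_span ⟨M, hM, Or.inr (Or.inr (Or.inr (Or.inr (Or.inr (Or.inl rfl)))))⟩
  · exact subset_span ⟨M, hM, Or.inr (Or.inr (Or.inr (Or.inr (Or.inr (Or.inr (Or.inl rfl))))))⟩
  · exact subset_span ⟨M, hM, Or.inr (Or.inr (Or.inr (Or.inr (Or.inr (Or.inr (Or.inr
      (Or.inl rfl)))))))⟩
  · rw [show Pplus dA * (Pplus dA * M * Pminus dA) * Pminus dA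
        = (Pplus dA * Pplus dA) * M * (Pminus dA * Pminus dA) by noncomm_ring, Pp_Pp, Pm_Pm]
    exact subset_span ⟨M, hM, Or.inr (Or.inr (Or.inr (Or.inr (Or.inl rfl))))⟩
  · rw [show Pplus dA * (Pplus dA * (Xmat dA * M * Xmat dA) * Pminus dA) * Pminus dA
        = (Pplus dA * Pplus dA) * (Xmat dA * M * Xmat dA) * (Pminus dA * Pminus dA) by
          noncomm_ring, Pp_Pp, Pm_Pm]
    exact subset_span ⟨M, hM, Or.inr (Or.inr (Or.inr (Or.inr (Or.inr (Or.inl rfl)))))⟩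
  · rw [show Pplus dA * (Pplus dA * Mᴴ * Pminus dA) * Pminus dA
        = (Pplus dA * Pplus dA) * Mᴴ * (Pminus dA * Pminus dA) by noncomm_ring, Pp_Pp, Pm_Pm]
    exact subset_span ⟨M, hM, Or.inr (Or.inr (Or.inr (Or.inr (Or.inr (Or.inr (Or.inl rfl))))))⟩
  · rw [show Pplus dA * (Pplus dA * (Xmat dA * Mᴴ * Xmat dA) * Pminus dA) * Pminus dA
        = (Pplus dA * Pplus dA) * (Xmat dA * Mᴴ * Xmat dA) * (Pminus dA * Pminus dA) by
          noncomm_ring, Pp_Pp, Pm_Pm]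
    exact subset_span ⟨M, hM, Or.inr (Or.inr (Or.inr (Or.inr (Or.inr (Or.inr (Or.inr
      (Or.inl rfl)))))))⟩
  · rw [show Pplus dA * (Pminus dA * M * Pplus dA) * Pminus dA
        = (Pplus dA * Pminus dA) * M * (Pplus dA * Pminus dA) by noncomm_ring, Pp_Pm,
        Matrix.zero_mul, Matrix.mul_zero]
    exact zero_mem _
  · rw [show Pplus dA * (Pminus dA * (Xmat dA * M * Xmat dA) * Pplus dA) * Pminus dA
        = (Pplus dA * Pminus dA) * (Xmat dA * M * Xmat dA) * (Pplus dA * Pminus dA) by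
          noncomm_ring, Pp_Pm, Matrix.zero_mul, Matrix.mul_zero]
    exact zero_mem _
  · rw [show Pplus dA * (Pminus dA * Mᴴ * Pplus dA) * Pminus dA
        = (Pplus dA * Pminus dA) * Mᴴ * (Pplus dA * Pminus dA) by noncomm_ring, Pp_Pm,
        Matrix.zero_mul, Matrix.mul_zero]
    exact zero_mem _
  · rw [show Pplus dA * (Pminus dA * (Xmat dA * Mᴴ * Xmat dA) * Pplus dA) * Pminus dA
        = (Pplus dA * Pminus dA) * (Xmat dA * Mᴴ * Xmat dA) * (Pplus dA * Pminus dA) by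
          noncomm_ring, Pp_Pm, Matrix.zero_mul, Matrix.mul_zero]
    exact zero_mem _


lemma finrank_bound :
    Module.finrank ℂ (span ℂ (symSet dA (S : Set (Matrix (Fin dA) (Fin dA) ℂ)))) ≤
      12 * Module.finrank ℂ S := by
  classical
  set d := Module.finrank ℂ S with hd
  set Mat := Matrix (Fin dA) (Fin dA) ℂ
  let b : Module.Basis (Fin d) ℂ S := Module.finBasis ℂ S
  let c : Fin d → Mat := fun j => (b j : Mat)
  have hSc : (S : Set Mat) ⊆ ↑(span ℂ (Set.range c)) := by
    intro M hM
    have h1 : (⟨M, hM⟩ : S) ∈ span ℂ (Set.range b) := by rw [b.span_eq]; trivial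
    have h2 := mem_span_image_of_linear S.subtype h1
    rw [← Set.range_comp] at h2
    exact h2
  let gens : Fin 12 → Fin d → Mat := fun i j =>
    ![c j, Xmat dA * c j * Xmat dA, (c j)ᴴ, Xmat dA * (c j)ᴴ * Xmat dA,
      Pplus dA * c j * Pminus dA, Pplus dA * (Xmat dA * c j * Xmat dA) * Pminus dA,
      Pplus dA * (c j)ᴴ * Pminus dA, Pplus dA * (Xmat dA * (c j)ᴴ * Xmat dA) * Pminus dA,
      Pminus dA * c j * Pplus dA, Pminus dA * (Xmat dA * c j * Xmat dA) * Pplus dA,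
      Pminus dA * (c j)ᴴ * Pplus dA, Pminus dA * (Xmat dA * (c j)ᴴ * Xmat dA) * Pplus dA] i
  let G : Finset Mat := Finset.univ.biUnion (fun i : Fin 12 => Finset.univ.image (gens i))
  have hmemG : ∀ (i : Fin 12) (j : Fin d), gens i j ∈ (G : Set Mat) := fun i j =>
    Finset.mem_coe.mpr (Finset.mem_biUnion.mpr
      ⟨i, Finset.mem_univ _, Finset.mem_image_of_mem _ (Finset.mem_univ j)⟩)
  have hGcard : G.card ≤ 12 * d := by
    refine (Finset.card_biUnion_le_card_mul _ _ d ?_).trans ?_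
    · intro i _
      exact (Finset.card_image_le).trans (by simp)
    · simp
  have hsub : symSet dA (S : Set Mat) ⊆ ↑(span ℂ ((G : Set Mat))) := by
    rintro x ⟨M, hM, h⟩
    have hMc : M ∈ span ℂ (Set.range c) := hSc hM
    have hMd : Mᴴ ∈ span ℂ ((·ᴴ) '' Set.range c) := dag_mem_span_image hMc
    rcases h with h|h|h|h|h|h|h|h|h|h|h|h <;> rw [h]
    · exact case_helper (LinearMap.id) (fun y hy => by obtain ⟨j, rfl⟩ := hy; exact hmemG 0 j) hMc
    · exact case_helper (sand (Xmat dA) (Xmat dA))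
        (fun y hy => by obtain ⟨j, rfl⟩ := hy; exact hmemG 1 j) hMc
    · exact case_helper (LinearMap.id)
        (fun y hy => by obtain ⟨z, ⟨j, rfl⟩, rfl⟩ := hy; exact hmemG 2 j) hMd
    · exact case_helper (sand (Xmat dA) (Xmat dA))
        (fun y hy => by obtain ⟨z, ⟨j, rfl⟩, rfl⟩ := hy; exact hmemG 3 j) hMd
    · exact case_helper (sand (Pplus dA) (Pminus dA))
        (fun y hy => by obtain ⟨j, rfl⟩ := hy; exact hmemG 4 j) hMc
    · exact case_helper ((sand (Pplus dA) (Pminus dA)).comp (sand (Xmat dA) (Xmat dA)))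
        (fun y hy => by obtain ⟨j, rfl⟩ := hy; exact hmemG 5 j) hMc
    · exact case_helper (sand (Pplus dA) (Pminus dA))
        (fun y hy => by obtain ⟨z, ⟨j, rfl⟩, rfl⟩ := hy; exact hmemG 6 j) hMd
    · exact case_helper ((sand (Pplus dA) (Pminus dA)).comp (sand (Xmat dA) (Xmat dA)))
        (fun y hy => by obtain ⟨z, ⟨j, rfl⟩, rfl⟩ := hy; exact hmemG 7 j) hMd
    · exact case_helper (sand (Pminus dA) (Pplus dA))
        (fun y hy => by obtain ⟨j, rfl⟩ := hy; exact hmemG 8 j) hMc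
    · exact case_helper ((sand (Pminus dA) (Pplus dA)).comp (sand (Xmat dA) (Xmat dA)))
        (fun y hy => by obtain ⟨j, rfl⟩ := hy; exact hmemG 9 j) hMc
    · exact case_helper (sand (Pminus dA) (Pplus dA))
        (fun y hy => by obtain ⟨z, ⟨j, rfl⟩, rfl⟩ := hy; exact hmemG 10 j) hMd
    · exact case_helper ((sand (Pminus dA) (Pplus dA)).comp (sand (Xmat dA) (Xmat dA)))
        (fun y hy => by obtain ⟨z, ⟨j, rfl⟩, rfl⟩ := hy; exact hmemG 11 j) hMd
  calc Module.finrank ℂ (span ℂ (symSet dA (S : Set Mat)))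
      ≤ Module.finrank ℂ (span ℂ ((G : Set Mat))) :=
        Submodule.finrank_mono (Submodule.span_le.mpr hsub)
    _ ≤ G.card := finrank_span_finset_le_card G
    _ ≤ 12 * d := hGcard

end Aux


/-- **Symmetrisation of a strongly unextendible subspace (from the proof of
Lemma 8 of the paper).**  If `S` is a strongly unextendible subspace of `dA×dA`
matrices, then the span `S'` of its symmetrisation satisfies: `dim S' ≤ 12·dim S`;
`S'` is strongly unextendible; `S'` and `S'X` are closed under conjugate transpose;
and `tr[Mᴴ(I+X)N(I−X)] = 0` for all `M ∈ S'` and `N ∈ S'^⊥`. -/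
theorem symmetrised_subspace_properties
    (dA : ℕ) (hdA : 0 < dA) (S : Submodule ℂ (Matrix (Fin dA) (Fin dA) ℂ))
    (hS : StronglyUnextendible (S : Set (Matrix (Fin dA) (Fin dA) ℂ))) :
    Module.finrank ℂ (Submodule.span ℂ (symSet dA (S : Set (Matrix (Fin dA) (Fin dA) ℂ)))) ≤
        12 * Module.finrank ℂ S ∧
    StronglyUnextendible
      ((Submodule.span ℂ (symSet dA (S : Set (Matrix (Fin dA) (Fin dA) ℂ)))) :
        Set (Matrix (Fin dA) (Fin dA) ℂ)) ∧
    (∀ M ∈ Submodule.span ℂ (symSet dA (S : Set (Matrix (Fin dA) (Fin dA) ℂ))),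
      Mᴴ ∈ Submodule.span ℂ (symSet dA (S : Set (Matrix (Fin dA) (Fin dA) ℂ)))) ∧
    (∀ A ∈ (fun M => M * Xmat dA) ''
        ((Submodule.span ℂ (symSet dA (S : Set (Matrix (Fin dA) (Fin dA) ℂ)))) :
          Set (Matrix (Fin dA) (Fin dA) ℂ)),
      Aᴴ ∈ (fun M => M * Xmat dA) ''
        ((Submodule.span ℂ (symSet dA (S : Set (Matrix (Fin dA) (Fin dA) ℂ)))) :
          Set (Matrix (Fin dA) (Fin dA) ℂ))) ∧
    (∀ M ∈ Submodule.span ℂ (symSet dA (S : Set (Matrix (Fin dA) (Fin dA) ℂ))),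
      ∀ N ∈ frobOrthSet
        ((Submodule.span ℂ (symSet dA (S : Set (Matrix (Fin dA) (Fin dA) ℂ)))) :
          Set (Matrix (Fin dA) (Fin dA) ℂ)),
        Matrix.trace (Mᴴ * (1 + Xmat dA) * N * (1 - Xmat dA)) = 0) := by
  classical
  refine ⟨finrank_bound S, ?_, ?_, ?_, ?_⟩
  · intro k hk u v hu hv
    obtain ⟨Mf, hMf, hne⟩ := hS k hk u v hu hv
    exact ⟨Mf, fun t => Submodule.subset_span ⟨Mf t, hMf t, Or.inl rfl⟩, hne⟩
  · intro M hM
    exact span_closed_dag (fun x hx => Submodule.subset_span (dag_symSet S x hx)) hM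
  · rintro A' ⟨A, hA, rfl⟩
    refine ⟨Xmat dA * Aᴴ * Xmat dA, ?_, ?_⟩
    · exact span_closed_linear (sand (Xmat dA) (Xmat dA)) (Xsand_symSet S)
        (span_closed_dag (fun x hx => Submodule.subset_span (dag_symSet S x hx)) hA)
    · show Xmat dA * Aᴴ * Xmat dA * Xmat dA = (A * Xmat dA)ᴴ
      rw [show Xmat dA * Aᴴ * Xmat dA * Xmat dA = Xmat dA * Aᴴ * (Xmat dA * Xmat dA) by
          noncomm_ring, XX, mul_one, Matrix.conjTranspose_mul, Xmat_herm]
  · intro M hM N hN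
    have hK : Pplus dA * M * Pminus dA ∈
        Submodule.span ℂ (symSet dA (S : Set (Matrix (Fin dA) (Fin dA) ℂ))) :=
      span_closed_linear (sand (Pplus dA) (Pminus dA)) (Psand_symSet S) hM
    have h4 : (1 + Xmat dA) * M * (1 - Xmat dA) = (4 : ℂ) • (Pplus dA * M * Pminus dA) := by
      simp only [Pplus, Pminus, Matrix.smul_mul, Matrix.mul_smul, smul_smul]
      norm_num
    have hK4 : (1 + Xmat dA) * M * (1 - Xmat dA) ∈
        Submodule.span ℂ (symSet dA (S : Set (Matrix (Fin dA) (Fin dA) ℂ))) := by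
      rw [h4]; exact Submodule.smul_mem _ _ hK
    have h0 := hN _ hK4
    simp only [frobInner] at h0
    rw [Matrix.trace_mul_comm]
    rw [show (1 - Xmat dA) * (Mᴴ * (1 + Xmat dA) * N)
        = ((1 + Xmat dA) * M * (1 - Xmat dA))ᴴ * N by
      simp only [Matrix.conjTranspose_mul, Matrix.conjTranspose_sub, Matrix.conjTranspose_add,
        Matrix.conjTranspose_one, Xmat_herm]
      noncomm_ring]
    exact h0
end
end
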